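/- Let H be a complex Hilbert space, A a finite index set, and (P_α)_{α∈A} a family of orthogonal projections on H that are pairwise orthogonal (P_α P_{α'} = 0 for α ≠ α'). Let ψ, φ ∈ H with ‖ψ‖ = ‖φ‖ = 1, and for β ∈ [0,1] define Q(β) = Σ_{α∈A} ‖P_α ψ‖^{2(1−β)} · |⟪ψ, P_α φ⟫|^β. Then for all 0 ≤ a ≤ b ≤ 1 with a < 1 one has Q(b) ≤ Q(a)^{(1−b)/(1−a)}. -/

import Mathlib

open scoped ComplexConjugate

lemma aux_inner_proj {H : Type*} [NormedAddCommGroup H] [InnerProductSpace ℂ H] [CompleteSpace H]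
    (T : H →L[ℂ] H) (hT : IsIdempotentElem T ∧ IsSelfAdjoint T) (x y : H) :
    (inner ℂ x (T y) : ℂ) = inner ℂ (T x) (T y) := by
  have hadj : ContinuousLinearMap.adjoint T = T :=
    (ContinuousLinearMap.isSelfAdjoint_iff').1 hT.2
  have hid : T (T y) = T y := by
    conv_rhs => rw [← hT.1]
    rfl
  calc (inner ℂ x (T y) : ℂ) = inner ℂ x (T (T y)) := by rw [hid]
    _ = inner ℂ (ContinuousLinearMap.adjoint T x) (T y) := by
        rw [ContinuousLinearMap.adjoint_inner_left]
    _ = inner ℂ (T x) (T y) := by rw [hadj]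

lemma aux_bessel {H : Type*} [NormedAddCommGroup H] [InnerProductSpace ℂ H] [CompleteSpace H]
    {ι : Type*} [Fintype ι] (P : ι → H →L[ℂ] H)
    (hP : ∀ α, IsIdempotentElem (P α) ∧ IsSelfAdjoint (P α))
    (horth : ∀ α α', α ≠ α' → P α * P α' = 0)
    (χ : H) (hχ : ‖χ‖ = 1) : ∑ α, ‖(P α) χ‖ ^ 2 ≤ 1 := by
  classical
  set S : H →L[ℂ] H := ∑ α, P α with hS
  have hSχ : S χ = ∑ α, P α χ := by simp [hS]
  have hcross : ∀ α α', α ≠ α' → (inner ℂ (P α χ) (P α' χ) : ℂ) = 0 := by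
    intro α α' h
    have h1 : (inner ℂ (P α χ) (P α' χ) : ℂ) = inner ℂ χ ((P α * P α') χ) := by
      have := ContinuousLinearMap.adjoint_inner_left (P α) (P α' χ) χ
      rw [(ContinuousLinearMap.isSelfAdjoint_iff').1 (hP α).2] at this
      exact this
    rw [h1, horth α α' h]; simp
  have hnorm : ‖S χ‖ ^ 2 = ∑ α, ‖P α χ‖ ^ 2 := by
    have h1 : (inner ℂ (S χ) (S χ) : ℂ) = ∑ α, inner ℂ (P α χ) (P α χ) := by
      rw [hSχ, sum_inner]
      refine Finset.sum_congr rfl fun α _ => ?_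
      rw [inner_sum, Finset.sum_eq_single α]
      · intro α' _ h; exact hcross α α' (Ne.symm h)
      · intro h; exact absurd (Finset.mem_univ α) h
    have h2 : ((‖S χ‖ ^ 2 : ℝ) : ℂ) = ((∑ α, ‖P α χ‖ ^ 2 : ℝ) : ℂ) := by
      push_cast
      calc ((‖S χ‖ : ℂ)) ^ 2 = inner ℂ (S χ) (S χ) := (inner_self_eq_norm_sq_to_K (S χ)).symm
        _ = ∑ α, inner ℂ (P α χ) (P α χ) := h1
        _ = ∑ α, ((‖P α χ‖ : ℂ)) ^ 2 :=
            Finset.sum_congr rfl fun α _ => inner_self_eq_norm_sq_to_K _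
    exact_mod_cast h2
  have hle : ∑ α, ‖P α χ‖ ^ 2 ≤ ‖S χ‖ := by
    have h2 : ∀ α, ‖P α χ‖ ^ 2 = (inner ℂ χ (P α χ) : ℂ).re := by
      intro α
      rw [aux_inner_proj (P α) (hP α) χ χ, ← inner_self_eq_norm_sq (𝕜 := ℂ)]
      rfl
    have h3 : ∑ α, ‖P α χ‖ ^ 2 = (inner ℂ χ (S χ) : ℂ).re := by
      rw [hSχ, inner_sum]
      rw [Complex.re_sum]
      exact Finset.sum_congr rfl fun α _ => h2 α
    rw [h3]
    calc (inner ℂ χ (S χ) : ℂ).re ≤ ‖(inner ℂ χ (S χ) : ℂ)‖ := Complex.re_le_norm _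
      _ ≤ ‖χ‖ * ‖S χ‖ := norm_inner_le_norm _ _
      _ = ‖S χ‖ := by rw [hχ, one_mul]
  nlinarith [norm_nonneg (S χ), hnorm]

/-- Monotonicity estimate `Q(b) ≤ Q(a)^{(1−b)/(1−a)}` for the interpolated
eigenfunction correlator of pairwise orthogonal projections and normalized vectors. -/
theorem stmt_15 {H : Type*} [NormedAddCommGroup H] [InnerProductSpace ℂ H] [CompleteSpace H]
    {ι : Type*} [Fintype ι] (P : ι → H →L[ℂ] H)
    (hP : ∀ α, IsIdempotentElem (P α) ∧ IsSelfAdjoint (P α))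
    (horth : ∀ α α', α ≠ α' → P α * P α' = 0)
    (ψ φ : H) (hψ : ‖ψ‖ = 1) (hφ : ‖φ‖ = 1) (Q : ℝ → ℝ)
    (hQ : ∀ β : ℝ, Q β = ∑ α, ‖(P α) ψ‖ ^ (2 * (1 - β))
        * ‖inner ℂ ψ ((P α) φ)‖ ^ β)
    (a b : ℝ) (ha : 0 ≤ a) (hab : a ≤ b) (hb : b ≤ 1) (ha1 : a < 1) :
    Q b ≤ Q a ^ ((1 - b) / (1 - a)) := by
  classical
  set y : ι → ℝ := fun α => ‖inner ℂ ψ ((P α) φ)‖ with hy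
  have hy0 : ∀ α, 0 ≤ y α := fun α => norm_nonneg _
  have hw0 : ∀ α, (0:ℝ) ≤ ‖(P α) ψ‖ := fun α => norm_nonneg _
  -- Q(1) bound: ∑ y ≤ 1
  have hyle : ∀ α, y α ≤ ‖(P α) ψ‖ * ‖(P α) φ‖ := by
    intro α
    have : y α = ‖(inner ℂ ((P α) ψ) ((P α) φ) : ℂ)‖ := by
      rw [hy, ← aux_inner_proj (P α) (hP α) ψ φ]
    rw [this]
    exact norm_inner_le_norm _ _
  have hpq22 : Real.HolderConjugate 2 2 := Real.holderConjugate_iff.2 ⟨one_lt_two, by norm_num⟩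
  have hQ1 : ∑ α, y α ≤ 1 := by
    have hCS := Real.inner_le_Lp_mul_Lq (Finset.univ)
      (fun α => ‖(P α) ψ‖) (fun α => ‖(P α) φ‖) hpq22
    have hfac : ∀ χ : H, ‖χ‖ = 1 →
        (∑ α, |‖(P α) χ‖| ^ (2:ℝ)) ^ ((1:ℝ)/2) ≤ 1 := by
      intro χ hχ
      have h1 : ∑ α, |‖(P α) χ‖| ^ (2:ℝ) = ∑ α, ‖(P α) χ‖ ^ (2:ℕ) := by
        refine Finset.sum_congr rfl fun α _ => ?_
        rw [abs_of_nonneg (norm_nonneg _), ← Real.rpow_natCast]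
        norm_num
      rw [h1]
      exact Real.rpow_le_one (by positivity) (aux_bessel P hP horth χ hχ) (by norm_num)
    calc ∑ α, y α ≤ ∑ α, ‖(P α) ψ‖ * ‖(P α) φ‖ :=
          Finset.sum_le_sum fun α _ => hyle α
      _ ≤ (∑ α, |‖(P α) ψ‖| ^ (2:ℝ)) ^ ((1:ℝ)/2)
            * (∑ α, |‖(P α) φ‖| ^ (2:ℝ)) ^ ((1:ℝ)/2) := hCS
      _ ≤ 1 * 1 := by
          exact mul_le_mul (hfac ψ hψ) (hfac φ hφ) (by positivity) (by norm_num)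
      _ = 1 := by norm_num
  rcases eq_or_lt_of_le hb with hb1 | hb1
  · -- b = 1
    rw [hb1, hQ 1]
    have : ∀ α, ‖(P α) ψ‖ ^ (2 * (1 - (1:ℝ))) * ‖inner ℂ ψ ((P α) φ)‖ ^ (1:ℝ)
        = y α := by
      intro α
      rw [hy]; norm_num
    rw [Finset.sum_congr rfl fun α _ => this α]
    have h2 : ((1:ℝ) - 1) / (1 - a) = 0 := by rw [sub_self, zero_div]
    rw [h2, Real.rpow_zero]
    exact hQ1
  · rcases eq_or_lt_of_le hab with hab' | hab'
    · -- a = b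
      rw [← hab', div_self (by linarith : (1:ℝ) - a ≠ 0), Real.rpow_one]
    · -- a < b < 1
      set θ : ℝ := (1 - b) / (1 - a) with hθ
      have hθ0 : 0 < θ := div_pos (by linarith) (by linarith)
      have hθ1 : θ < 1 := (div_lt_one (by linarith)).2 (by linarith)
      set u : ι → ℝ := fun α => ‖(P α) ψ‖ ^ (2 * (1 - a)) * y α ^ a with hu
      have hu0 : ∀ α, 0 ≤ u α := fun α => by
        exact mul_nonneg (Real.rpow_nonneg (hw0 α) _) (Real.rpow_nonneg (hy0 α) _)
      have hane : (1:ℝ) - a ≠ 0 := by linarith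
      have hexp1 : 2 * (1 - a) * θ = 2 * (1 - b) := by
        rw [hθ]; field_simp
      have hexp2 : a * θ + (1 - θ) = b := by
        rw [hθ]; field_simp; ring
      have key : ∀ α, ‖(P α) ψ‖ ^ (2 * (1 - b)) * y α ^ b = u α ^ θ * y α ^ (1 - θ) := by
        intro α
        have h1 : u α ^ θ = ‖(P α) ψ‖ ^ (2 * (1 - b)) * y α ^ (a * θ) := by
          rw [hu, Real.mul_rpow (Real.rpow_nonneg (hw0 α) _) (Real.rpow_nonneg (hy0 α) _),
            ← Real.rpow_mul (hw0 α), ← Real.rpow_mul (hy0 α), hexp1]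
        rw [h1, mul_assoc, ← Real.rpow_add' (hy0 α) (by rw [hexp2]; linarith), hexp2]
      have hpq : Real.HolderConjugate (1/θ) (1/(1-θ)) := by
        rw [Real.holderConjugate_iff]; constructor
        · exact one_lt_one_div hθ0 hθ1
        · rw [one_div, one_div, inv_inv, inv_inv]; ring
      have hCS := Real.inner_le_Lp_mul_Lq (Finset.univ)
        (fun α => u α ^ θ) (fun α => y α ^ (1-θ)) hpq
      have hsimp1 : ∀ α, |u α ^ θ| ^ ((1:ℝ)/θ) = u α := by
        intro α
        rw [abs_of_nonneg (Real.rpow_nonneg (hu0 α) _), ← Real.rpow_mul (hu0 α),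
          mul_one_div_cancel hθ0.ne', Real.rpow_one]
      have hsimp2 : ∀ α, |y α ^ (1-θ)| ^ ((1:ℝ)/(1-θ)) = y α := by
        intro α
        rw [abs_of_nonneg (Real.rpow_nonneg (hy0 α) _), ← Real.rpow_mul (hy0 α),
          mul_one_div_cancel (by linarith : (1:ℝ) - θ ≠ 0), Real.rpow_one]
      rw [Finset.sum_congr rfl fun α _ => hsimp1 α,
        Finset.sum_congr rfl fun α _ => hsimp2 α, one_div_one_div, one_div_one_div] at hCS
      have hQb : Q b = ∑ α, u α ^ θ * y α ^ (1-θ) := by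
        rw [hQ b]; exact Finset.sum_congr rfl fun α _ => key α
      have hQa : Q a = ∑ α, u α := by rw [hQ a]
      calc Q b = ∑ α, u α ^ θ * y α ^ (1-θ) := hQb
        _ ≤ (∑ α, u α) ^ θ * (∑ α, y α) ^ (1-θ) := hCS
        _ ≤ (∑ α, u α) ^ θ * 1 := by
            refine mul_le_mul_of_nonneg_left ?_ (Real.rpow_nonneg ?_ _)
            · exact Real.rpow_le_one (Finset.sum_nonneg fun α _ => hy0 α) hQ1 (by linarith)
            · exact Finset.sum_nonneg fun α _ => hu0 α
        _ = Q a ^ θ := by rw [mul_one, hQa]
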